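/- arXiv:1504.05679 — 4 statements merged into one kernel-verified Lean document; each statement's English description precedes it below -/
import Mathlib

section
/- For all real numbers s₁, s₂ ≥ 0 and p ∈ [0,1], the achievable uplink sum rate is within gap 2 of the outer bound: p(1−p)(C(s₁) + C(s₂)) + p²·C(s₁ + s₂) − 1 ≥ p·[(1−p)(C(s₁) + C(s₂)) + p·C(s₁ + s₂ + 2√(s₁ s₂))] − 2. -/
/-- `C x = log₂ (1 + x)`. -/
noncomputable def C (x : ℝ) : ℝ := Real.logb 2 (1 + x)

theorem stmt_1 (s₁ s₂ p : ℝ) (hs₁ : 0 ≤ s₁) (hs₂ : 0 ≤ s₂)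
    (hp0 : 0 ≤ p) (hp1 : p ≤ 1) :
    p * (1 - p) * (C s₁ + C s₂) + p ^ 2 * C (s₁ + s₂) - 1 ≥
      p * ((1 - p) * (C s₁ + C s₂) + p * C (s₁ + s₂ + 2 * Real.sqrt (s₁ * s₂))) - 2 := by
  have hsqrt : 2 * Real.sqrt (s₁ * s₂) ≤ s₁ + s₂ := by
    nlinarith [Real.sq_sqrt (mul_nonneg hs₁ hs₂), Real.sqrt_nonneg (s₁ * s₂),
      sq_nonneg (s₁ - s₂), sq_nonneg (Real.sqrt (s₁ * s₂))]
  have hpos : (0:ℝ) < 1 + (s₁ + s₂) := by linarith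
  have hkey : C (s₁ + s₂ + 2 * Real.sqrt (s₁ * s₂)) ≤ C (s₁ + s₂) + 1 := by
    unfold C
    have h1 : 1 + (s₁ + s₂ + 2 * Real.sqrt (s₁ * s₂)) ≤ 2 * (1 + (s₁ + s₂)) := by linarith
    calc Real.logb 2 (1 + (s₁ + s₂ + 2 * Real.sqrt (s₁ * s₂)))
        ≤ Real.logb 2 (2 * (1 + (s₁ + s₂))) := by
          exact Real.logb_le_logb_of_le (by norm_num) (by positivity) h1
      _ = 1 + Real.logb 2 (1 + (s₁ + s₂)) := by
          rw [Real.logb_mul (by norm_num) (ne_of_gt hpos), Real.logb_self_eq_one] <;> norm_num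
      _ = Real.logb 2 (1 + (s₁ + s₂)) + 1 := by ring
  nlinarith [sq_nonneg p, mul_le_one₀ hp1 hp0 hp1, sq_nonneg (1 - p)]
end

section
/- For all real numbers s₁ ≥ s₂ > 0 and p ∈ [0,1]: (p(2−p)/(3−p))·C(s₁) + (p/(3−p))·log₂(s₁/s₂) ≥ p·(C(s₁) − C(s₂)) + (p(2−p)/(3−p))·C(s₂). -/
theorem stmt_8 (s₁ s₂ p : ℝ) (hs₂ : 0 < s₂) (hs : s₂ ≤ s₁) (hp0 : 0 ≤ p) (hp1 : p ≤ 1) :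
    (p * (2 - p) / (3 - p)) * C s₁ + (p / (3 - p)) * Real.logb 2 (s₁ / s₂) ≥
      p * (C s₁ - C s₂) + (p * (2 - p) / (3 - p)) * C s₂ := by
  have h3 : (0:ℝ) < 3 - p := by linarith
  have hs1 : 0 < s₁ := lt_of_lt_of_le hs₂ hs
  have h1s₂ : (0:ℝ) < 1 + s₂ := by linarith
  have h1s₁ : (0:ℝ) < 1 + s₁ := by linarith
  have key : C s₁ - C s₂ ≤ Real.logb 2 (s₁ / s₂) := by
    have h1 : C s₁ - C s₂ = Real.logb 2 ((1 + s₁) / (1 + s₂)) := by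
      rw [C, C, Real.logb_div (ne_of_gt h1s₁) (ne_of_gt h1s₂)]
    rw [h1]
    rw [Real.logb_le_logb one_lt_two (by positivity) (by positivity)]
    rw [div_le_div_iff₀ h1s₂ hs₂]
    nlinarith
  have hkey : 0 ≤ p * (Real.logb 2 (s₁ / s₂) - (C s₁ - C s₂)) :=
    mul_nonneg hp0 (by linarith)
  rw [ge_iff_le, ← sub_nonneg]
  have heq : (p * (2 - p) / (3 - p)) * C s₁ + (p / (3 - p)) * Real.logb 2 (s₁ / s₂) -
      (p * (C s₁ - C s₂) + (p * (2 - p) / (3 - p)) * C s₂)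
      = p * (Real.logb 2 (s₁ / s₂) - (C s₁ - C s₂)) / (3 - p) := by
    field_simp
    ring
  rw [heq]
  exact div_nonneg hkey h3.le
end

section
/- For all real numbers s ≥ 2 and p ∈ [0,1]: (1/(3−p))·[ p(1−p)·log₂(1 + (1 − 1/s)/(8/s + 1/s + 1/s)) + p·log₂(1 + (1 − 1/s)/(1/s + 1/s)) ] ≥ (p(2−p)/(3−p))·C(s) − (p(1−p)/(3−p))·log₂(10) − p/(3−p). -/
theorem stmt_9 (s p : ℝ) (hs : 2 ≤ s) (hp0 : 0 ≤ p) (hp1 : p ≤ 1) :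
    (1 / (3 - p)) *
        (p * (1 - p) * Real.logb 2 (1 + (1 - 1 / s) / (8 / s + 1 / s + 1 / s)) +
          p * Real.logb 2 (1 + (1 - 1 / s) / (1 / s + 1 / s))) ≥
      (p * (2 - p) / (3 - p)) * C s - (p * (1 - p) / (3 - p)) * Real.logb 2 10 -
        p / (3 - p) := by
  have hs0 : (0:ℝ) < s := by linarith
  have hsne : s ≠ 0 := ne_of_gt hs0
  have h3p : (0:ℝ) < 3 - p := by linarith
  have h3pne : (3:ℝ) - p ≠ 0 := ne_of_gt h3p
  have h1 : 1 + (1 - 1 / s) / (8 / s + 1 / s + 1 / s) = (s + 9) / 10 := by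
    field_simp
    ring
  have h2 : 1 + (1 - 1 / s) / (1 / s + 1 / s) = (s + 1) / 2 := by
    field_simp
    ring
  have e3 : (1:ℝ) + s = s + 1 := by ring
  rw [h1, h2, C, e3]
  have e1 : Real.logb 2 ((s + 9) / 10) = Real.logb 2 (s + 9) - Real.logb 2 10 :=
    Real.logb_div (by positivity) (by norm_num)
  have e2 : Real.logb 2 ((s + 1) / 2) = Real.logb 2 (s + 1) - 1 := by
    rw [Real.logb_div (by positivity) (by norm_num), Real.logb_self_eq_one] <;> norm_num
  rw [e1, e2]
  set A := Real.logb 2 (s + 9) with hA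
  set B := Real.logb 2 (s + 1) with hB
  set L := Real.logb 2 10 with hL
  have hmono : B ≤ A := by
    exact Real.logb_le_logb_of_le (by norm_num) (by linarith) (by linarith)
  have key : 0 ≤ p * (1 - p) * (A - B) :=
    mul_nonneg (mul_nonneg hp0 (by linarith)) (by linarith)
  rw [ge_iff_le, ← sub_nonneg]
  have heq : (1 / (3 - p)) * (p * (1 - p) * (A - L) + p * (B - 1)) -
      ((p * (2 - p) / (3 - p)) * B - (p * (1 - p) / (3 - p)) * L - p / (3 - p))
      = (1 / (3 - p)) * (p * (1 - p) * (A - B)) := by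
    field_simp
    ring
  rw [heq]
  positivity
end

section
/- For all real numbers s₁ ≥ s₂ ≥ 1 and p ∈ [0,1], the Gaussian superposition coding rates R₁ = p·log₂(1 + s₁·(1/s₂)) and R₂ = p·log₂(1 + (s₂·(1 − 1/s₂))/(s₂·(1/s₂) + 1)) satisfy R₁ ≥ p(C(s₁) − C(s₂)) and R₂ = p·C(s₂) − p; in particular the pair (R₁, R₂) is within gap (0, p) of the corner point (p(C(s₁) − C(s₂)), p·C(s₂)). -/
theorem stmt_15 (s₁ s₂ p : ℝ) (hs₂ : 1 ≤ s₂) (hs : s₂ ≤ s₁) (hp0 : 0 ≤ p) (hp1 : p ≤ 1) :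
    p * Real.logb 2 (1 + s₁ * (1 / s₂)) ≥ p * (C s₁ - C s₂) ∧
    p * Real.logb 2 (1 + (s₂ * (1 - 1 / s₂)) / (s₂ * (1 / s₂) + 1)) = p * C s₂ - p := by
  have h0 : (0:ℝ) < s₂ := lt_of_lt_of_le one_pos hs₂
  have h1 : (0:ℝ) < s₁ := lt_of_lt_of_le h0 hs
  constructor
  · apply mul_le_mul_of_nonneg_left _ hp0
    have hdiv : C s₁ - C s₂ = Real.logb 2 ((1 + s₁) / (1 + s₂)) := by
      rw [C, C, Real.logb_div (by linarith) (by linarith)]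
    rw [hdiv]
    apply Real.logb_le_logb_of_le one_lt_two (by positivity)
    have e : 1 + s₁ * (1/s₂) = (s₂ + s₁)/s₂ := by field_simp
    rw [e, div_le_div_iff₀ (by linarith) h0]
    nlinarith
  · have he : 1 + (s₂ * (1 - 1 / s₂)) / (s₂ * (1 / s₂) + 1) = (1 + s₂) / 2 := by
      have hne : s₂ ≠ 0 := ne_of_gt h0
      rw [mul_one_div_cancel hne]
      field_simp
      norm_num
      ring
    rw [he, Real.logb_div (by linarith) (by norm_num), Real.logb_self_eq_one one_lt_two, C]
    ring
end
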